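/- Let 0 < ε < 2 and let f : F_2^n → F_2 have at most n^{3−ε} crucial terms, i.e., T^{≥3}(f) ≤ n^{3−ε}. Then there exists a 0-restriction f' of f on n' = ⌊√((2/3)·n^ε)⌋ variables with T^{≥3}(f') ≤ (2/3)n'. -/

import Mathlib

open Finset

/-- Evaluation of the multilinear polynomial over `F₂` whose set of monomials is `M`. -/
def anfEval {n : ℕ} (M : Finset (Finset (Fin n))) (x : Fin n → ZMod 2) : ZMod 2 :=
  ∑ S ∈ M, ∏ j ∈ S, x j

/-- `M` is the algebraic normal form (set of monomials) of the Boolean function `f`. -/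
def IsANF {n : ℕ} (f : (Fin n → ZMod 2) → ZMod 2) (M : Finset (Finset (Fin n))) : Prop :=
  ∀ x, f x = anfEval M x

/-- The number of crucial terms (monomials of degree at least 3) of an ANF. -/
def crucialCount {n : ℕ} (M : Finset (Finset (Fin n))) : ℕ :=
  (M.filter fun S => 3 ≤ S.card).card

/-- The `0`-restriction of `f` keeping exactly the variables in `K` (all other
variables are set to the constant `0`). It is a Boolean function on `K.card` variables. -/
def zeroRestrict {n : ℕ} (f : (Fin n → ZMod 2) → ZMod 2) (K : Finset (Fin n)) :
    (Fin n → ZMod 2) → ZMod 2 :=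
  fun x => f fun i => if i ∈ K then x i else 0

lemma anf_zero {n : ℕ} (M : Finset (Finset (Fin n))) (h : ∀ x, anfEval M x = 0) : M = ∅ := by
  by_contra hne
  obtain ⟨S, hS, hmin⟩ := Finset.exists_min_image M Finset.card (Finset.nonempty_of_ne_empty hne)
  have hx := h (fun j => if j ∈ S then 1 else 0)
  rw [anfEval] at hx
  have heq : (∑ S' ∈ M, ∏ j ∈ S', (if j ∈ S then (1:ZMod 2) else 0))
      = ∑ S' ∈ M, if S' ⊆ S then 1 else 0 := by
    refine Finset.sum_congr rfl fun S' _ => ?_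
    by_cases hsub : S' ⊆ S
    · rw [if_pos hsub]
      exact Finset.prod_eq_one fun j hj => by simp [hsub hj]
    · rw [if_neg hsub]
      obtain ⟨j, hj, hjn⟩ := Finset.not_subset.mp hsub
      exact Finset.prod_eq_zero hj (by simp [hjn])
  rw [heq, Finset.sum_eq_single S (fun S' hS' hne' => by
        rw [if_neg]
        intro hsub
        exact hne' (Finset.eq_of_subset_of_card_le hsub (hmin S' hS')))
      (fun h' => absurd hS h'), if_pos Finset.Subset.rfl] at hx
  exact one_ne_zero hx

lemma anf_add {n : ℕ} (M₁ M₂ : Finset (Finset (Fin n))) (x : Fin n → ZMod 2) :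
    anfEval (symmDiff M₁ M₂) x = anfEval M₁ x + anfEval M₂ x := by
  have h1 : anfEval M₁ x = anfEval (M₁ \ M₂) x + anfEval (M₁ ∩ M₂) x := by
    rw [anfEval, anfEval, anfEval, ← Finset.sum_union (Finset.disjoint_sdiff_inter M₁ M₂),
      Finset.sdiff_union_inter]
  have h2 : anfEval M₂ x = anfEval (M₂ \ M₁) x + anfEval (M₂ ∩ M₁) x := by
    rw [anfEval, anfEval, anfEval, ← Finset.sum_union (Finset.disjoint_sdiff_inter M₂ M₁),
      Finset.sdiff_union_inter]
  have h3 : anfEval (symmDiff M₁ M₂) x = anfEval (M₁ \ M₂) x + anfEval (M₂ \ M₁) x := by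
    rw [anfEval, anfEval, anfEval, ← Finset.sum_union disjoint_sdiff_sdiff]
    rfl
  have hCC : anfEval (M₁ ∩ M₂) x + anfEval (M₁ ∩ M₂) x = 0 := CharTwo.add_self_eq_zero _
  rw [Finset.inter_comm M₂ M₁] at h2
  rw [h1, h2, h3]
  linear_combination -hCC

lemma anf_unique {n : ℕ} (M₁ M₂ : Finset (Finset (Fin n)))
    (h : ∀ x, anfEval M₁ x = anfEval M₂ x) : M₁ = M₂ := by
  have : symmDiff M₁ M₂ = ∅ := by
    apply anf_zero
    intro x
    rw [anf_add, h x]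
    exact CharTwo.add_self_eq_zero _
  simpa [symmDiff_eq_bot] using this

lemma anf_restrict {n : ℕ} (f : (Fin n → ZMod 2) → ZMod 2) (M : Finset (Finset (Fin n)))
    (hM : IsANF f M) (K : Finset (Fin n)) :
    IsANF (zeroRestrict f K) (M.filter (· ⊆ K)) := by
  intro x
  rw [zeroRestrict, hM, anfEval, anfEval,
    ← Finset.sum_filter_add_sum_filter_not M (· ⊆ K)]
  have h2 : ∑ S ∈ M.filter (fun S => ¬ S ⊆ K), ∏ j ∈ S, (if j ∈ K then x j else 0) = 0 := by
    refine Finset.sum_eq_zero fun S hS => ?_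
    obtain ⟨j, hj, hjn⟩ := Finset.not_subset.mp (Finset.mem_filter.mp hS).2
    exact Finset.prod_eq_zero hj (by simp [hjn])
  rw [h2, add_zero]
  refine Finset.sum_congr rfl fun S hS => Finset.prod_congr rfl fun j hj => ?_
  rw [if_pos ((Finset.mem_filter.mp hS).2 hj)]

lemma card_supersets {n : ℕ} (S₀ : Finset (Fin n)) (n' : ℕ) (h3 : S₀.card ≤ n') :
    (((univ : Finset (Fin n)).powersetCard n').filter (fun K => S₀ ⊆ K)).card
      = Nat.choose (n - S₀.card) (n' - S₀.card) := by
  have hrhs : ((univ \ S₀ : Finset (Fin n)).powersetCard (n' - S₀.card)).card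
      = Nat.choose (n - S₀.card) (n' - S₀.card) := by
    rw [Finset.card_powersetCard, Finset.card_sdiff_of_subset (Finset.subset_univ S₀), Finset.card_univ,
      Fintype.card_fin]
  rw [← hrhs]
  apply Finset.card_bij (fun K _ => K \ S₀)
  · intro K hK
    rw [Finset.mem_filter, Finset.mem_powersetCard] at hK
    rw [Finset.mem_powersetCard]
    exact ⟨Finset.sdiff_subset_sdiff hK.1.1 Finset.Subset.rfl,
      by rw [Finset.card_sdiff_of_subset hK.2, hK.1.2]⟩
  · intro K hK K' hK' heq
    rw [Finset.mem_filter] at hK hK'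
    calc K = K \ S₀ ∪ S₀ := (Finset.sdiff_union_of_subset hK.2).symm
    _ = K' \ S₀ ∪ S₀ := by rw [heq]
    _ = K' := Finset.sdiff_union_of_subset hK'.2
  · intro K' hK'
    rw [Finset.mem_powersetCard] at hK'
    have hdisj : Disjoint K' S₀ := Finset.disjoint_of_subset_left hK'.1 Finset.sdiff_disjoint
    refine ⟨K' ∪ S₀, ?_, ?_⟩
    · rw [Finset.mem_filter, Finset.mem_powersetCard]
      refine ⟨⟨Finset.subset_univ _, ?_⟩, Finset.subset_union_right⟩
      rw [Finset.card_union_of_disjoint hdisj, hK'.2]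
      omega
    · rw [Finset.union_sdiff_right, Finset.sdiff_eq_self_of_disjoint hdisj]

lemma choose_ineq (a b : ℕ) (hba : b ≤ a) :
    Nat.choose a b * (a+3)^3 ≤ (b+3)^3 * Nat.choose (a+3) (b+3) := by
  have h1 := Nat.add_one_mul_choose_eq a b
  have h2 := Nat.add_one_mul_choose_eq (a+1) (b+1)
  have h3 := Nat.add_one_mul_choose_eq (a+2) (b+2)
  have hid : Nat.choose a b * ((a+1)*(a+2)*(a+3))
      = Nat.choose (a+3) (b+3) * ((b+1)*(b+2)*(b+3)) := by
    calc Nat.choose a b * ((a+1)*(a+2)*(a+3))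
        = ((a+1) * Nat.choose a b) * ((a+2)*(a+3)) := by ring
      _ = (Nat.choose (a+1) (b+1) * (b+1)) * ((a+2)*(a+3)) := by rw [h1]
      _ = ((a+1+1) * Nat.choose (a+1) (b+1)) * ((b+1)*(a+3)) := by ring
      _ = (Nat.choose (a+1+1) (b+1+1) * (b+1+1)) * ((b+1)*(a+3)) := by rw [h2]
      _ = ((a+2+1) * Nat.choose (a+2) (b+2)) * ((b+1)*(b+2)) := by ring_nf
      _ = (Nat.choose (a+2+1) (b+2+1) * (b+2+1)) * ((b+1)*(b+2)) := by rw [h3]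
      _ = Nat.choose (a+3) (b+3) * ((b+1)*(b+2)*(b+3)) := by ring_nf
  have hq : (b+1)*(b+2)*(b+3) * (a+3)^3 ≤ (b+3)^3 * ((a+1)*(a+2)*(a+3)) := by
    have e1 : (b+1)*(a+3) ≤ (a+1)*(b+3) := by nlinarith
    have e2 : (b+2)*(a+3) ≤ (a+2)*(b+3) := by nlinarith
    calc (b+1)*(b+2)*(b+3) * (a+3)^3
        = ((b+1)*(a+3)) * ((b+2)*(a+3)) * ((b+3)*(a+3)) := by ring
      _ ≤ ((a+1)*(b+3)) * ((a+2)*(b+3)) * ((b+3)*(a+3)) :=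
          Nat.mul_le_mul (Nat.mul_le_mul e1 e2) le_rfl
      _ = (b+3)^3 * ((a+1)*(a+2)*(a+3)) := by ring
  have key : (Nat.choose a b * (a+3)^3) * ((a+1)*(a+2)*(a+3))
      ≤ ((b+3)^3 * Nat.choose (a+3) (b+3)) * ((a+1)*(a+2)*(a+3)) := by
    calc (Nat.choose a b * (a+3)^3) * ((a+1)*(a+2)*(a+3))
        = (Nat.choose a b * ((a+1)*(a+2)*(a+3))) * (a+3)^3 := by ring
      _ = (Nat.choose (a+3) (b+3) * ((b+1)*(b+2)*(b+3))) * (a+3)^3 := by rw [hid]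
      _ = Nat.choose (a+3) (b+3) * ((b+1)*(b+2)*(b+3) * (a+3)^3) := by ring
      _ ≤ Nat.choose (a+3) (b+3) * ((b+3)^3 * ((a+1)*(a+2)*(a+3))) :=
          Nat.mul_le_mul le_rfl hq
      _ = ((b+3)^3 * Nat.choose (a+3) (b+3)) * ((a+1)*(a+2)*(a+3)) := by ring
  exact Nat.le_of_mul_le_mul_right key (by positivity)

lemma main_count {n n' : ℕ} (h3 : 3 ≤ n') (hn : n' ≤ n) (Tset : Finset (Finset (Fin n)))
    (hTs : ∀ S ∈ Tset, 3 ≤ S.card) :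
    ∃ K : Finset (Fin n), K.card = n' ∧
      (Tset.filter (· ⊆ K)).card * n^3 ≤ Tset.card * n'^3 := by
  set A := (univ : Finset (Fin n)).powersetCard n' with hA
  have hAcard : A.card = Nat.choose n n' := by
    rw [hA, Finset.card_powersetCard, Finset.card_univ, Fintype.card_fin]
  have hAne : A.Nonempty := by
    rw [← Finset.card_pos, hAcard]
    exact Nat.choose_pos hn
  have hdc : ∑ K ∈ A, (Tset.filter (· ⊆ K)).card
      = ∑ S ∈ Tset, (A.filter (fun K => S ⊆ K)).card := by
    simp only [Finset.card_filter]
    exact Finset.sum_comm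
  have hper : ∀ S ∈ Tset, (A.filter (fun K => S ⊆ K)).card ≤ Nat.choose (n-3) (n'-3) := by
    intro S hS
    obtain ⟨S₀, hS₀sub, hS₀card⟩ := Finset.exists_subset_card_eq (hTs S hS)
    have hmono : (A.filter (fun K => S ⊆ K)) ⊆ (A.filter (fun K => S₀ ⊆ K)) := by
      intro K hK
      rw [Finset.mem_filter] at hK ⊢
      exact ⟨hK.1, hS₀sub.trans hK.2⟩
    calc (A.filter (fun K => S ⊆ K)).card ≤ (A.filter (fun K => S₀ ⊆ K)).card :=
          Finset.card_le_card hmono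
      _ = Nat.choose (n - 3) (n' - 3) := by
          rw [card_supersets S₀ n' (hS₀card ▸ h3), hS₀card]
  have hsum : ∑ K ∈ A, (Tset.filter (· ⊆ K)).card ≤ Tset.card * Nat.choose (n-3) (n'-3) := by
    rw [hdc]
    calc ∑ S ∈ Tset, (A.filter (fun K => S ⊆ K)).card
        ≤ ∑ _S ∈ Tset, Nat.choose (n-3) (n'-3) := Finset.sum_le_sum hper
      _ = Tset.card * Nat.choose (n-3) (n'-3) := by rw [Finset.sum_const, smul_eq_mul]
  obtain ⟨K, hKA, hKmin⟩ := Finset.exists_min_image A (fun K => (Tset.filter (· ⊆ K)).card) hAne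
  have hKcard : K.card = n' := (Finset.mem_powersetCard.mp hKA).2
  refine ⟨K, hKcard, ?_⟩
  have havg : (Tset.filter (· ⊆ K)).card * A.card ≤ Tset.card * Nat.choose (n-3) (n'-3) := by
    calc (Tset.filter (· ⊆ K)).card * A.card
        = ∑ _K' ∈ A, (Tset.filter (· ⊆ K)).card := by rw [Finset.sum_const, smul_eq_mul, mul_comm]
      _ ≤ ∑ K' ∈ A, (Tset.filter (· ⊆ K')).card := Finset.sum_le_sum (fun K' hK' => hKmin K' hK')
      _ ≤ _ := hsum
  obtain ⟨b, rfl⟩ : ∃ b, n' = b + 3 := ⟨n' - 3, by omega⟩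
  obtain ⟨a, rfl⟩ : ∃ a, n = a + 3 := ⟨n - 3, by omega⟩
  have hci := choose_ineq a b (by omega)
  simp only [Nat.add_sub_cancel] at havg
  have hfinal : (Tset.filter (· ⊆ K)).card * (a+3)^3 * A.card
      ≤ Tset.card * (b+3)^3 * A.card := by
    calc (Tset.filter (· ⊆ K)).card * (a+3)^3 * A.card
        = ((Tset.filter (· ⊆ K)).card * A.card) * (a+3)^3 := by ring
      _ ≤ (Tset.card * Nat.choose a b) * (a+3)^3 := Nat.mul_le_mul_right _ havg
      _ = Tset.card * (Nat.choose a b * (a+3)^3) := by ring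
      _ ≤ Tset.card * ((b+3)^3 * Nat.choose (a+3) (b+3)) := Nat.mul_le_mul_left _ hci
      _ = Tset.card * (b+3)^3 * A.card := by rw [hAcard]; ring
  exact Nat.le_of_mul_le_mul_right hfinal (by rw [← Finset.card_pos] at hAne; exact hAne)

/-- for `0 < ε < 2`, a Boolean function with at most `n^(3-ε)` crucial terms
has a `0`-restriction on `n' = ⌊√((2/3)·n^ε)⌋` variables with at most `(2/3)n'` crucial
terms. -/
theorem stmt4 {n : ℕ} (ε : ℝ) (hε1 : 0 < ε) (hε2 : ε < 2)
    (f : (Fin n → ZMod 2) → ZMod 2) (M : Finset (Finset (Fin n))) (hM : IsANF f M)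
    (hT : (crucialCount M : ℝ) ≤ (n : ℝ) ^ ((3 : ℝ) - ε)) :
    ∃ K : Finset (Fin n),
      K.card = ⌊Real.sqrt (2 / 3 * (n : ℝ) ^ ε)⌋₊ ∧
      ∀ M' : Finset (Finset (Fin n)), IsANF (zeroRestrict f K) M' →
        (crucialCount M' : ℝ) ≤ 2 / 3 * K.card := by
  rw [crucialCount] at hT
  set n' := ⌊Real.sqrt (2 / 3 * (n : ℝ) ^ ε)⌋₊ with hn'def
  set Tset := M.filter (fun S => 3 ≤ S.card) with hTdef
  -- n' ≤ n
  have hn'n : n' ≤ n := by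
    rcases Nat.eq_zero_or_pos n with h0 | hpos
    · subst h0
      simp [hn'def, Real.zero_rpow hε1.ne']
    · have h1 : (1:ℝ) ≤ (n:ℝ) := by exact_mod_cast hpos
      have h2 : (n:ℝ) ^ ε ≤ (n:ℝ) ^ (2:ℝ) := Real.rpow_le_rpow_of_exponent_le h1 hε2.le
      have h2' : (n:ℝ) ^ (2:ℝ) = (n:ℝ)^2 := by
        rw [show ((2:ℝ)) = ((2:ℕ):ℝ) by norm_num, Real.rpow_natCast]
      have h3 : (2:ℝ)/3 * (n:ℝ)^ε ≤ ((n:ℝ))^2 := by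
        rw [h2'] at h2
        nlinarith [Real.rpow_nonneg (by positivity : (0:ℝ) ≤ (n:ℝ)) ε]
      have h4 : Real.sqrt (2/3 * (n:ℝ)^ε) ≤ (n:ℝ) := by
        calc Real.sqrt (2/3 * (n:ℝ)^ε) ≤ Real.sqrt ((n:ℝ)^2) := Real.sqrt_le_sqrt h3
          _ = (n:ℝ) := Real.sqrt_sq (by positivity)
      calc n' ≤ ⌊(n:ℝ)⌋₊ := Nat.floor_le_floor h4
        _ = n := Nat.floor_natCast n
  -- n'^2 ≤ 2/3 n^ε
  have hsq : ((n':ℝ))^2 ≤ 2/3 * (n:ℝ)^ε := by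
    have hnn : (0:ℝ) ≤ 2/3 * (n:ℝ)^ε := by positivity
    have h1 : (n':ℝ) ≤ Real.sqrt (2/3 * (n:ℝ)^ε) := Nat.floor_le (Real.sqrt_nonneg _)
    nlinarith [Real.sq_sqrt hnn, Real.sqrt_nonneg (2/3 * (n:ℝ)^ε)]
  by_cases h3 : 3 ≤ n'
  · -- main case
    have hnpos : 0 < n := by omega
    obtain ⟨K, hKcard, hKcount⟩ := main_count h3 hn'n Tset
      (fun S hS => (Finset.mem_filter.mp hS).2)
    refine ⟨K, hKcard, ?_⟩
    intro M' hM'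
    have hM'eq : M' = M.filter (· ⊆ K) :=
      anf_unique _ _ (fun x => by rw [← hM' x, anf_restrict f M hM K x])
    have hcc : crucialCount M' = (Tset.filter (· ⊆ K)).card := by
      rw [hM'eq, crucialCount, hTdef, Finset.filter_comm]
    rw [hcc, hKcard]
    have hrpow : (n:ℝ)^((3:ℝ)-ε) * (n:ℝ)^ε = (n:ℝ)^3 := by
      rw [← Real.rpow_add (by exact_mod_cast hnpos), sub_add_cancel,
        show ((3:ℝ)) = ((3:ℕ):ℝ) by norm_num, Real.rpow_natCast]
    have hcast : ((Tset.filter (· ⊆ K)).card : ℝ) * (n:ℝ)^3 ≤ (Tset.card:ℝ) * (n':ℝ)^3 := by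
      exact_mod_cast hKcount
    have hn3 : (0:ℝ) < (n:ℝ)^3 := by positivity
    have hPnn : (0:ℝ) ≤ (n':ℝ) := by positivity
    have hRnn : (0:ℝ) ≤ (n:ℝ)^((3:ℝ)-ε) := Real.rpow_nonneg (by positivity) _
    have key : ((Tset.filter (· ⊆ K)).card : ℝ) * (n:ℝ)^3 ≤ (2/3 * (n':ℝ)) * (n:ℝ)^3 := by
      calc ((Tset.filter (· ⊆ K)).card : ℝ) * (n:ℝ)^3 ≤ (Tset.card:ℝ) * (n':ℝ)^3 := hcast
        _ = ((Tset.card:ℝ) * (n':ℝ)^2) * (n':ℝ) := by ring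
        _ ≤ (((n:ℝ)^((3:ℝ)-ε)) * (2/3 * (n:ℝ)^ε)) * (n':ℝ) := by
            apply mul_le_mul_of_nonneg_right _ hPnn
            exact mul_le_mul hT hsq (by positivity) hRnn
        _ = (2/3 * (n':ℝ)) * ((n:ℝ)^((3:ℝ)-ε) * (n:ℝ)^ε) := by ring
        _ = (2/3 * (n':ℝ)) * (n:ℝ)^3 := by rw [hrpow]
    exact le_of_mul_le_mul_right key hn3
  · -- small case : n' ≤ 2, any K of size n' works
    obtain ⟨K, _, hKcard⟩ := Finset.exists_subset_card_eq
      (show n' ≤ (univ : Finset (Fin n)).card by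
        rw [Finset.card_univ, Fintype.card_fin]; exact hn'n)
    refine ⟨K, hKcard, ?_⟩
    intro M' hM'
    have hM'eq : M' = M.filter (· ⊆ K) :=
      anf_unique _ _ (fun x => by rw [← hM' x, anf_restrict f M hM K x])
    have hzero : crucialCount M' = 0 := by
      rw [hM'eq, crucialCount, Finset.card_eq_zero, Finset.filter_eq_empty_iff]
      intro S hS
      have hle := Finset.card_le_card (Finset.mem_filter.mp hS).2
      omega
    rw [hzero]
    push_cast
    positivity
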